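/- In the twisted Heisenberg–Virasoro algebra, for any scalar e and any nonzero integer n, one has [x_n + e·I(n), x_{−n} + e·I(−n)] = −2n(x_0 + e·I(0) − e·C_DI − (e²/2)·C_I) + ((n³−n)/12)·C_D. Consequently, the elements {x_n + e·I(n) : n ≠ 0} ∪ {x_0 + e·I(0) − e·C_DI − (e²/2)·C_I, C_D} span a subalgebra isomorphic to the Virasoro algebra. -/

import Mathlib

/-- Index set for the basis of the twisted Heisenberg–Virasoro algebra. -/
inductive HVIdx : Type
  | x : ℤ → HVIdx
  | I : ℤ → HVIdx
  | CD : HVIdx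
  | CDI : HVIdx
  | CI : HVIdx

/-- A realization of the twisted Heisenberg–Virasoro algebra 𝕃: a complex Lie
algebra with a basis `{x n, I n, C_D, C_DI, C_I}` satisfying the defining brackets. -/
structure TwistedHV (L : Type*) [LieRing L] [LieAlgebra ℂ L] where
  b : Module.Basis HVIdx ℂ L
  bracket_xx : ∀ n m : ℤ, ⁅b (.x n), b (.x m)⁆ =
      ((m : ℂ) - n) • b (.x (n + m)) +
      (if n = -m then ((n : ℂ) ^ 3 - n) / 12 else 0) • b .CD
  bracket_xI : ∀ n m : ℤ, ⁅b (.x n), b (.I m)⁆ = (m : ℂ) • b (.I (n + m)) +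
      (if n = -m then (n : ℂ) ^ 2 + n else 0) • b .CDI
  bracket_II : ∀ n m : ℤ, ⁅b (.I n), b (.I m)⁆ = (if n = -m then (n : ℂ) else 0) • b .CI
  central_CD : ∀ y : L, ⁅y, b .CD⁆ = 0
  central_CDI : ∀ y : L, ⁅y, b .CDI⁆ = 0
  central_CI : ∀ y : L, ⁅y, b .CI⁆ = 0

/-- A realization of the Virasoro algebra: a complex Lie algebra with a basis
`{L n : n ∈ ℤ} ∪ {C}` (indexed by `Option ℤ`, with `none` for the central element `C`)
satisfying the Virasoro relations. -/
structure VirasoroAlg (V : Type*) [LieRing V] [LieAlgebra ℂ V] where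
  b : Module.Basis (Option ℤ) ℂ V
  bracket_LL : ∀ n m : ℤ, ⁅b (some n), b (some m)⁆ =
      ((m : ℂ) - n) • b (some (n + m)) +
      (if n = -m then ((n : ℂ) ^ 3 - n) / 12 else 0) • b none
  central_C : ∀ v : V, ⁅v, b none⁆ = 0

section HVAux

variable {L : Type*} [LieRing L] [LieAlgebra ℂ L]

noncomputable def hvY (A : TwistedHV L) (e : ℂ) : Option ℤ → L
  | none => A.b .CD
  | some n => A.b (.x n) + e • A.b (.I n) -
      (if n = 0 then e • A.b .CDI + (e ^ 2 / 2) • A.b .CI else 0)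

lemma hvY_bracket (A : TwistedHV L) (e : ℂ) (n m : ℤ) :
    ⁅hvY A e (some n), hvY A e (some m)⁆ =
      ((m : ℂ) - n) • hvY A e (some (n + m)) +
      (if n = -m then ((n : ℂ) ^ 3 - n) / 12 else 0) • hvY A e none := by
  have hIx : ∀ p q : ℤ, ⁅A.b (.I p), A.b (.x q)⁆ =
      -((p : ℂ) • A.b (.I (q + p)) + (if q = -p then (q : ℂ) ^ 2 + q else 0) • A.b .CDI) := by
    intro p q
    rw [← lie_skew, A.bracket_xI]
  have hc : ∀ (k : ℤ) (z : L),
      ⁅z, (if k = 0 then e • A.b .CDI + (e ^ 2 / 2) • A.b .CI else 0 : L)⁆ = 0 := by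
    intro k z
    split <;> simp [A.central_CDI, A.central_CI]
  have hc' : ∀ (k : ℤ) (z : L),
      ⁅(if k = 0 then e • A.b .CDI + (e ^ 2 / 2) • A.b .CI else 0 : L), z⁆ = 0 := by
    intro k z
    rw [← lie_skew, hc, neg_zero]
  simp only [hvY]
  rw [lie_sub, sub_lie, sub_lie, hc, hc', hc]
  rw [lie_add, add_lie, add_lie, lie_smul, lie_smul, smul_lie, smul_lie,
    A.bracket_xx, A.bracket_xI, hIx, A.bracket_II]
  by_cases h : n + m = 0
  · have hm : m = -n := by omega
    subst hm
    by_cases hn : n = 0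
    · subst hn
      norm_num
    · have e2 : n + -n = 0 := by omega
      have e3 : -n + n = 0 := by omega
      simp only [e2, e3, neg_neg, eq_self_iff_true, if_true, ite_true]
      push_cast
      module
  · rw [add_comm m n] at *
    simp only [if_neg (by omega : n ≠ -m), if_neg (by omega : m ≠ -n),
      if_neg (by omega : ¬ n + m = 0)]
    push_cast
    module

lemma hvY_none (A : TwistedHV L) (e : ℂ) : hvY A e none = A.b .CD := rfl

lemma lie_hvY_none (A : TwistedHV L) (e : ℂ) (z : L) : ⁅z, hvY A e none⁆ = 0 :=
  A.central_CD z

lemma hvY_none_lie (A : TwistedHV L) (e : ℂ) (z : L) : ⁅hvY A e none, z⁆ = 0 := by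
  rw [← lie_skew, lie_hvY_none, neg_zero]

lemma hvY_li (A : TwistedHV L) (e : ℂ) : LinearIndependent ℂ (hvY A e) := by
  classical
  let g : Option ℤ → HVIdx := fun j => j.elim HVIdx.CD HVIdx.x
  have hg : Function.Injective g := by
    intro a b hab
    cases a <;> cases b <;> simp_all [g]
  let T : L →ₗ[ℂ] (Option ℤ →₀ ℂ) :=
    (Finsupp.lcomapDomain g hg) ∘ₗ (A.b.repr : L →ₗ[ℂ] (HVIdx →₀ ℂ))
  have key : ∀ j, T (hvY A e j) = Finsupp.single j 1 := by
    intro j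
    ext k
    have hT : ∀ z : L, T z k = A.b.repr z (g k) := fun z => rfl
    rw [hT]
    cases j with
    | none =>
      cases k <;> simp [hvY, g, Finsupp.single_apply]
    | some n =>
      by_cases hn : n = 0 <;>
        cases k <;>
          simp [hvY, hn, g, Finsupp.single_apply, eq_comm]
  have li1 : LinearIndependent ℂ (T ∘ hvY A e) := by
    have h2 : (T ∘ hvY A e) = fun j : Option ℤ => Finsupp.single j (1 : ℂ) := by
      funext j; exact key j
    rw [h2]
    have := (Finsupp.basisSingleOne : Module.Basis (Option ℤ) ℂ (Option ℤ →₀ ℂ)).linearIndependent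
    simpa using this
  exact li1.of_comp T

lemma hvY_mem_lie (A : TwistedHV L) (e : ℂ) (j k : Option ℤ) :
    ⁅hvY A e j, hvY A e k⁆ ∈ Submodule.span ℂ (Set.range (hvY A e)) := by
  cases j with
  | none => rw [hvY_none_lie]; exact zero_mem _
  | some n =>
    cases k with
    | none => rw [lie_hvY_none]; exact zero_mem _
    | some m =>
      rw [hvY_bracket]
      exact add_mem (Submodule.smul_mem _ _ (Submodule.subset_span ⟨_, rfl⟩))
        (Submodule.smul_mem _ _ (Submodule.subset_span ⟨_, rfl⟩))

noncomputable def hvK (A : TwistedHV L) (e : ℂ) : LieSubalgebra ℂ L :=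
  { Submodule.span ℂ (Set.range (hvY A e)) with
    lie_mem' := by
      intro u v hu hv
      refine Submodule.span_induction₂ (p := fun u v _ _ =>
          ⁅u, v⁆ ∈ Submodule.span ℂ (Set.range (hvY A e)))
        ?_ ?_ ?_ ?_ ?_ ?_ ?_ hu hv
      · rintro _ _ ⟨j, rfl⟩ ⟨k, rfl⟩
        exact hvY_mem_lie A e j k
      · intro y hy; simp
      · intro x hx; simp
      · intro x y z hx hy hz h1 h2; rw [add_lie]; exact add_mem h1 h2
      · intro x y z hx hy hz h1 h2; rw [lie_add]; exact add_mem h1 h2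
      · intro r x y hx hy h1; rw [smul_lie]; exact Submodule.smul_mem _ _ h1
      · intro r x y hx hy h1; rw [lie_smul]; exact Submodule.smul_mem _ _ h1 }

noncomputable def hvBasis (A : TwistedHV L) (e : ℂ) : Module.Basis (Option ℤ) ℂ (hvK A e) :=
  (Module.Basis.span (hvY_li A e)).map
    (LinearEquiv.ofEq _ (hvK A e).toSubmodule rfl)

lemma hvBasis_coe (A : TwistedHV L) (e : ℂ) (j : Option ℤ) :
    (hvBasis A e j : L) = hvY A e j := by
  rw [hvBasis, Module.Basis.map_apply]
  exact congrArg Subtype.val (Module.Basis.span_apply (hvY_li A e) j)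

noncomputable def hvVir (A : TwistedHV L) (e : ℂ) : VirasoroAlg (hvK A e) where
  b := hvBasis A e
  bracket_LL := by
    intro n m
    apply Subtype.ext
    show ⁅(hvBasis A e (some n) : L), (hvBasis A e (some m) : L)⁆ =
      ((m : ℂ) - n) • (hvBasis A e (some (n + m)) : L) +
      (if n = -m then ((n : ℂ) ^ 3 - n) / 12 else 0) • (hvBasis A e none : L)
    rw [hvBasis_coe, hvBasis_coe, hvBasis_coe, hvBasis_coe]
    exact hvY_bracket A e n m
  central_C := by
    intro v
    apply Subtype.ext
    show ⁅(v : L), (hvBasis A e none : L)⁆ = 0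
    rw [hvBasis_coe]
    exact lie_hvY_none A e _

theorem vir_model {K : Type*} [LieRing K] [LieAlgebra ℂ K] (W : VirasoroAlg K) :
    ∃ (V : Type) (_ : LieRing V) (_ : LieAlgebra ℂ V) (_ : VirasoroAlg V),
      Nonempty (K ≃ₗ⁅ℂ⁆ V) := by
  classical
  letI iRing : LieRing (Option ℤ →₀ ℂ) :=
    { bracket := fun a b => W.b.repr ⁅W.b.repr.symm a, W.b.repr.symm b⁆
      add_lie := by intro a b c; simp [add_lie]
      lie_add := by intro a b c; simp [lie_add]
      lie_self := by intro a; simp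
      leibniz_lie := by
        intro a b c
        show W.b.repr ⁅W.b.repr.symm a, W.b.repr.symm (W.b.repr ⁅W.b.repr.symm b, W.b.repr.symm c⁆)⁆ =
          W.b.repr ⁅W.b.repr.symm (W.b.repr ⁅W.b.repr.symm a, W.b.repr.symm b⁆), W.b.repr.symm c⁆ +
          W.b.repr ⁅W.b.repr.symm b, W.b.repr.symm (W.b.repr ⁅W.b.repr.symm a, W.b.repr.symm c⁆)⁆
        rw [LinearEquiv.symm_apply_apply, LinearEquiv.symm_apply_apply,
          LinearEquiv.symm_apply_apply, ← map_add, leibniz_lie] }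
  letI iAlg : LieAlgebra ℂ (Option ℤ →₀ ℂ) :=
    { lie_smul := by
        intro t a b
        show W.b.repr ⁅W.b.repr.symm a, W.b.repr.symm (t • b)⁆ =
          t • W.b.repr ⁅W.b.repr.symm a, W.b.repr.symm b⁆
        rw [map_smul, lie_smul, map_smul] }
  have brk : ∀ a b : Option ℤ →₀ ℂ, ⁅a, b⁆ = W.b.repr ⁅W.b.repr.symm a, W.b.repr.symm b⁆ :=
    fun _ _ => rfl
  refine ⟨Option ℤ →₀ ℂ, iRing, iAlg, ?_, ⟨?_⟩⟩
  · exact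
    { b := W.b.map W.b.repr
      bracket_LL := by
        intro n m
        rw [Module.Basis.map_apply, Module.Basis.map_apply, Module.Basis.map_apply, Module.Basis.map_apply, brk]
        simp only [LinearEquiv.symm_apply_apply]
        rw [W.bracket_LL, map_add, map_smul, map_smul]
      central_C := by
        intro v
        rw [Module.Basis.map_apply, brk]
        simp only [LinearEquiv.symm_apply_apply]
        rw [W.central_C, map_zero] }
  · exact
    { W.b.repr with
      map_lie' := by
        intro x y
        show W.b.repr ⁅x, y⁆ = ⁅W.b.repr x, W.b.repr y⁆
        rw [brk]
        simp }

lemma hvY_range (A : TwistedHV L) (e : ℂ) :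
    Set.range (hvY A e) =
      ({y : L | ∃ n : ℤ, n ≠ 0 ∧ y = A.b (.x n) + e • A.b (.I n)} ∪
        {A.b (.x 0) + e • A.b (.I 0) - e • A.b .CDI - (e ^ 2 / 2) • A.b .CI,
          A.b .CD}) := by
  ext v
  simp only [Set.mem_union, Set.mem_insert_iff, Set.mem_singleton_iff, Set.mem_setOf_eq]
  constructor
  · rintro ⟨j, rfl⟩
    cases j with
    | none => exact Or.inr (Or.inr rfl)
    | some n =>
      by_cases hn : n = 0
      · subst hn
        refine Or.inr (Or.inl ?_)
        simp [hvY, sub_sub]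
      · exact Or.inl ⟨n, hn, by simp [hvY, hn]⟩
  · rintro (⟨n, hn, rfl⟩ | h | h)
    · exact ⟨some n, by simp [hvY, hn]⟩
    · exact ⟨some 0, by rw [h]; simp [hvY, sub_sub]⟩
    · exact ⟨none, by rw [h]; rfl⟩

end HVAux

/-- In 𝕃, `[x n + e•I n, x (−n) + e•I (−n)] =
−2n(x 0 + e•I 0 − e•C_DI − (e²/2)•C_I) + ((n³−n)/12)•C_D` for `n ≠ 0`; consequently the
elements `{x n + e•I n : n ≠ 0} ∪ {x 0 + e•I 0 − e•C_DI − (e²/2)•C_I, C_D}` span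
a Lie subalgebra which is isomorphic to the Virasoro algebra. -/
theorem thv_virasoro_subalgebra {L : Type*} [LieRing L] [LieAlgebra ℂ L]
    (A : TwistedHV L) (e : ℂ) :
    (∀ n : ℤ, n ≠ 0 →
      ⁅A.b (.x n) + e • A.b (.I n), A.b (.x (-n)) + e • A.b (.I (-n))⁆ =
        (-2 * (n : ℂ)) • (A.b (.x 0) + e • A.b (.I 0) - e • A.b .CDI
            - (e ^ 2 / 2) • A.b .CI)
          + (((n : ℂ) ^ 3 - n) / 12) • A.b .CD) ∧
    ∃ K : LieSubalgebra ℂ L,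
      (K : Submodule ℂ L) = Submodule.span ℂ
        ({y : L | ∃ n : ℤ, n ≠ 0 ∧ y = A.b (.x n) + e • A.b (.I n)} ∪
          {A.b (.x 0) + e • A.b (.I 0) - e • A.b .CDI - (e ^ 2 / 2) • A.b .CI,
            A.b .CD}) ∧
      ∃ (V : Type) (_ : LieRing V) (_ : LieAlgebra ℂ V) (_ : VirasoroAlg V),
        Nonempty (K ≃ₗ⁅ℂ⁆ V) := by
  constructor
  · intro n hn
    have h1 : hvY A e (some n) = A.b (.x n) + e • A.b (.I n) := by simp [hvY, hn]
    have h2 : hvY A e (some (-n)) = A.b (.x (-n)) + e • A.b (.I (-n)) := by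
      simp [hvY, neg_eq_zero, hn]
    have h3 := hvY_bracket A e n (-n)
    rw [h1, h2, show n + -n = 0 by omega] at h3
    rw [h3]
    simp only [hvY, neg_neg, eq_self_iff_true, if_true, ite_true]
    push_cast
    module
  · refine ⟨hvK A e, ?_, vir_model (hvVir A e)⟩
    show Submodule.span ℂ (Set.range (hvY A e)) = _
    rw [hvY_range]
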